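/- Let T be a triangulated category, N a triangulated subcategory of T, and U, V subcategories such that (U, U^⊥) and (^⊥V, V) are torsion pairs in T. Set X = U ∩ V ∩ N and assume that X is closed under direct summands, that (^⊥V)[1] ⊆ U ∩ N, and that U^⊥[-1] = V ∩ N. Then for every distinguished triangle A →(s) B → N → A[1] with A, B ∈ U ∩ V and N ∈ N, there exists a morphism t: B → A such that 1_A − t∘s and 1_B − s∘t both factor through X (that is, (U, X, V) satisfies the Verdier condition). -/

import Mathlib

open CategoryTheory Category Limits Pretriangulated

universe v u

variable {T : Type u} [Category.{v} T] [HasZeroObject T] [HasShift T ℤ]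
  [Preadditive T] [∀ n : ℤ, (CategoryTheory.shiftFunctor T n).Additive] [Pretriangulated T]

namespace VerdierPaper

/-- A morphism factors through the subcategory `X`. -/
def FactorsThru (X : Set T) {A B : T} (f : A ⟶ B) : Prop :=
  ∃ (X₀ : T) (_ : X₀ ∈ X) (g : A ⟶ X₀) (h : X₀ ⟶ B), f = g ≫ h

/-- A triangulated subcategory: closed under isomorphisms, shifts in both directions,
contains a zero object, and two-out-of-three for distinguished triangles. -/
structure IsTriangulatedSub (N : Set T) : Prop where
  zero : ∃ Z ∈ N, IsZero Z
  closedIso : ∀ {A B : T}, (A ≅ B) → A ∈ N → B ∈ N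
  shift : ∀ A ∈ N, (A⟦(1 : ℤ)⟧) ∈ N
  unshift : ∀ A ∈ N, (A⟦(-1 : ℤ)⟧) ∈ N
  two_of_three₁₂ : ∀ Tr ∈ (distTriang T), Tr.obj₁ ∈ N → Tr.obj₂ ∈ N → Tr.obj₃ ∈ N
  two_of_three₂₃ : ∀ Tr ∈ (distTriang T), Tr.obj₂ ∈ N → Tr.obj₃ ∈ N → Tr.obj₁ ∈ N
  two_of_three₁₃ : ∀ Tr ∈ (distTriang T), Tr.obj₁ ∈ N → Tr.obj₃ ∈ N → Tr.obj₂ ∈ N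

/-- Closed under direct summands (retracts). -/
def ClosedUnderSummands (S : Set T) : Prop :=
  ∀ (X₀ A : T), X₀ ∈ S → ∀ (i : A ⟶ X₀) (r : X₀ ⟶ A), i ≫ r = 𝟙 A → A ∈ S

/-- `f : A ⟶ B` is `X`-monic: every morphism from `A` to an object of `X` extends along `f`. -/
def XMonic (X : Set T) {A B : T} (f : A ⟶ B) : Prop :=
  ∀ X₀ ∈ X, ∀ g : A ⟶ X₀, ∃ h : B ⟶ X₀, f ≫ h = g

/-- `f : A ⟶ B` is `X`-epic: every morphism from an object of `X` to `B` lifts along `f`. -/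
def XEpic (X : Set T) {A B : T} (f : A ⟶ B) : Prop :=
  ∀ X₀ ∈ X, ∀ g : X₀ ⟶ B, ∃ h : X₀ ⟶ A, h ≫ f = g

/-- An `X`-preenvelope: an `X`-monic with target in `X`. -/
def Preenvelope (X : Set T) {A X₀ : T} (f : A ⟶ X₀) : Prop :=
  X₀ ∈ X ∧ XMonic X f

/-- An `X`-precover: an `X`-epic with source in `X`. -/
def Precover (X : Set T) {X₀ B : T} (f : X₀ ⟶ B) : Prop :=
  X₀ ∈ X ∧ XEpic X f

/-- `U^{⊥,X}`: objects such that every morphism from an object of `U` factors through `X`. -/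
def perpRightX (U X : Set T) : Set T :=
  {W | ∀ U₀ ∈ U, ∀ f : U₀ ⟶ W, FactorsThru X f}

/-- `^{X,⊥}V`: objects such that every morphism to an object of `V` factors through `X`. -/
def perpLeftX (X V : Set T) : Set T :=
  {W | ∀ V₀ ∈ V, ∀ f : W ⟶ V₀, FactorsThru X f}

/-- A localization triple `(U, X, V)` of `T`. Triangles `A[-1] → W → Q → A` are
recorded in the rotated form `W → Q → A → W[1]`. -/
structure IsLocalizationTriple (U X V : Set T) : Prop where
  subU : X ⊆ U
  subV : X ⊆ V
  precover : ∀ A : T, ∃ (W Q : T) (w : W ⟶ Q) (r : Q ⟶ A) (d : A ⟶ W⟦(1 : ℤ)⟧),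
    Triangle.mk w r d ∈ (distTriang T) ∧ Precover U r ∧ W ∈ perpRightX U X
  preenvelope : ∀ A : T, ∃ (R W : T) (j : A ⟶ R) (t : R ⟶ W) (d : W ⟶ A⟦(1 : ℤ)⟧),
    Triangle.mk j t d ∈ (distTriang T) ∧ Preenvelope V j ∧ W ∈ perpLeftX X V
  precoverV : ∀ A ∈ V, ∃ (W Q : T) (w : W ⟶ Q) (r : Q ⟶ A) (d : A ⟶ W⟦(1 : ℤ)⟧),
    Triangle.mk w r d ∈ (distTriang T) ∧ Precover U r ∧ W ∈ perpRightX U X ∧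
    Q ∈ U ∩ V ∧ W ∈ V ∧ W ∈ perpRightX (U ∩ V) X
  preenvelopeU : ∀ A ∈ U, ∃ (R W : T) (j : A ⟶ R) (t : R ⟶ W) (d : W ⟶ A⟦(1 : ℤ)⟧),
    Triangle.mk j t d ∈ (distTriang T) ∧ Preenvelope V j ∧ W ∈ perpLeftX X V ∧
    R ∈ U ∩ V ∧ W ∈ U ∧ W ∈ perpLeftX X (U ∩ V)

/-- An `N`-localization triple. -/
structure IsNLocalizationTriple (N U X V : Set T) extends IsLocalizationTriple U X V : Prop where
  xEq : X = U ∩ V ∩ N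
  perpR_subset : perpRightX U X ⊆ N
  perpL_subset : perpLeftX X V ⊆ N

/-- The Verdier condition for an `N`-localization triple. -/
def VerdierCondition (N U X V : Set T) : Prop :=
  ∀ (A B N₀ : T) (s : A ⟶ B) (g : B ⟶ N₀) (h : N₀ ⟶ A⟦(1 : ℤ)⟧),
    Triangle.mk s g h ∈ (distTriang T) → A ∈ U ∩ V → B ∈ U ∩ V → N₀ ∈ N →
    ∃ t : B ⟶ A, FactorsThru X (𝟙 A - s ≫ t) ∧ FactorsThru X (𝟙 B - t ≫ s)


/-- A torsion pair `(Cc, Dd)` in `T`. -/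
def TorsionPair (Cc Dd : Set T) : Prop :=
  (∀ C₀ ∈ Cc, ∀ D₀ ∈ Dd, ∀ f : C₀ ⟶ D₀, f = 0) ∧
  ∀ A : T, ∃ (C₀ D₀ : T) (f : C₀ ⟶ A) (g : A ⟶ D₀) (h : D₀ ⟶ C₀⟦(1 : ℤ)⟧),
    Triangle.mk f g h ∈ (distTriang T) ∧ C₀ ∈ Cc ∧ D₀ ∈ Dd

/-- `U^⊥`. -/
def rightPerp (U : Set T) : Set T := {A | ∀ U₀ ∈ U, ∀ f : U₀ ⟶ A, f = 0}

/-- `^⊥V`. -/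
def leftPerp (V : Set T) : Set T := {A | ∀ V₀ ∈ V, ∀ f : A ⟶ V₀, f = 0}

/-- Auxiliary membership criterion: an object which admits no nonzero maps to `U^⊥` and whose
shift lies in `U^⊥` belongs to `X`. -/
lemma mem_X_aux {N U V X : Set T}
    (htpU : TorsionPair U (rightPerp U)) (hX : X = U ∩ V ∩ N)
    (hXsumm : ClosedUnderSummands X)
    (h2 : ∀ A : T, (A⟦(1 : ℤ)⟧) ∈ rightPerp U ↔ A ∈ V ∩ N)
    (Y : T) (hUw : ∀ W ∈ rightPerp U, ∀ f : Y ⟶ W, f = 0)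
    (hsh : (Y⟦(1 : ℤ)⟧) ∈ rightPerp U) : Y ∈ X := by
  obtain ⟨U₈, W₈, f₈, q₈, e₈, hTri, hU₈, hW₈⟩ := htpU.2 Y
  have hq : (𝟙 Y) ≫ (Triangle.mk f₈ q₈ e₈).mor₂ = 0 := by
    exact (id_comp _).trans (hUw W₈ hW₈ q₈)
  obtain ⟨σ, hσ⟩ := Triangle.coyoneda_exact₂ _ hTri (𝟙 Y) hq
  have hU₈sh : (U₈⟦(1 : ℤ)⟧) ∈ rightPerp U := by
    intro U' hU' f
    have h0 : f ≫ ((Triangle.mk f₈ q₈ e₈).rotate.rotate).mor₂ = 0 := by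
      show f ≫ (-(f₈⟦(1 : ℤ)⟧')) = 0
      rw [Preadditive.comp_neg, hsh U' hU' (f ≫ f₈⟦(1 : ℤ)⟧'), neg_zero]
    obtain ⟨g', hg'⟩ := Triangle.coyoneda_exact₂ _
      (rot_of_distTriang _ (rot_of_distTriang _ hTri)) f h0
    rw [hg', hW₈ U' hU' g']; exact zero_comp
  have hU₈VN : U₈ ∈ V ∩ N := (h2 U₈).mp hU₈sh
  have hU₈X : U₈ ∈ X := by rw [hX]; exact ⟨⟨hU₈, hU₈VN.1⟩, hU₈VN.2⟩
  exact hXsumm U₈ Y hU₈X σ f₈ (by exact hσ.symm)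

private lemma split_sum_eq {P Q Z : T} (ι : Q ⟶ Z) (ρ : Z ⟶ Q) (σ : P ⟶ Z) (π : Z ⟶ P)
    (hιρ : ι ≫ ρ = 𝟙 Q) (hσπ : σ ≫ π = 𝟙 P) (hιπ : ι ≫ π = 0)
    {A B : T} (x₁ : A ⟶ P) (y₁ : P ⟶ B) (x₂ : A ⟶ Q) (y₂ : Q ⟶ B) :
    x₁ ≫ y₁ + x₂ ≫ y₂ =
      (x₂ ≫ ι + x₁ ≫ (σ - σ ≫ ρ ≫ ι)) ≫ (ρ ≫ y₂ + π ≫ y₁) := by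
  simp only [Preadditive.add_comp, Preadditive.comp_add, Preadditive.sub_comp,
    Preadditive.comp_sub, Category.assoc, reassoc_of% hιρ, reassoc_of% hιπ, reassoc_of% hσπ,
    zero_comp, comp_zero, id_comp]
  abel

/-- Sums of morphisms factoring through `X` factor through `X`. -/
lemma factorsThru_add {N U V X : Set T}
    (htpU : TorsionPair U (rightPerp U)) (hX : X = U ∩ V ∩ N)
    (hXsumm : ClosedUnderSummands X)
    (h2 : ∀ A : T, (A⟦(1 : ℤ)⟧) ∈ rightPerp U ↔ A ∈ V ∩ N)
    {A B : T} {f₁ f₂ : A ⟶ B}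
    (hf₁ : FactorsThru X f₁) (hf₂ : FactorsThru X f₂) :
    FactorsThru X (f₁ + f₂) := by
  obtain ⟨X₁, hX₁, x₁, y₁, rfl⟩ := hf₁
  obtain ⟨X₂, hX₂, x₂, y₂, rfl⟩ := hf₂
  have hX₁' : X₁ ∈ U ∩ V ∩ N := by rwa [hX] at hX₁
  have hX₂' : X₂ ∈ U ∩ V ∩ N := by rwa [hX] at hX₂
  have hX₁sh : (X₁⟦(1 : ℤ)⟧) ∈ rightPerp U := (h2 X₁).mpr ⟨hX₁'.1.2, hX₁'.2⟩
  have hX₂sh : (X₂⟦(1 : ℤ)⟧) ∈ rightPerp U := (h2 X₂).mpr ⟨hX₂'.1.2, hX₂'.2⟩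
  obtain ⟨Z, ι, π, hTz⟩ := distinguished_cocone_triangle (0 : (X₁⟦(-1 : ℤ)⟧) ⟶ X₂)
  have e : (X₁⟦(-1 : ℤ)⟧⟦(1 : ℤ)⟧) ≅ X₁ := shiftNegShift X₁ (1 : ℤ)
  obtain ⟨ρ, hιρ⟩ : ∃ ρ : Z ⟶ X₂, ι ≫ ρ = 𝟙 X₂ := by
    obtain ⟨ρ', hρ'⟩ := Triangle.yoneda_exact₂ _ hTz (𝟙 X₂) (by exact zero_comp)
    exact ⟨ρ', by exact hρ'.symm⟩
  obtain ⟨σ', hσ'π⟩ : ∃ σ' : (X₁⟦(-1 : ℤ)⟧⟦(1 : ℤ)⟧) ⟶ Z, σ' ≫ π = 𝟙 _ := by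
    obtain ⟨σ'', hσ''⟩ := Triangle.coyoneda_exact₂ _
      (rot_of_distTriang _ (rot_of_distTriang _ hTz)) (𝟙 (X₁⟦(-1 : ℤ)⟧⟦(1 : ℤ)⟧))
        (by show 𝟙 _ ≫ (-((0 : X₁⟦(-1 : ℤ)⟧ ⟶ X₂)⟦(1 : ℤ)⟧')) = 0; simp)
    exact ⟨σ'', by exact hσ''.symm⟩
  have hιπ : ι ≫ π = 0 := comp_distTriang_mor_zero₂₃ _ hTz
  have hσπ' : (e.inv ≫ σ') ≫ (π ≫ e.hom) = 𝟙 X₁ := by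
    rw [Category.assoc, ← Category.assoc σ' π, hσ'π, id_comp, e.inv_hom_id]
  have hιπ' : ι ≫ (π ≫ e.hom) = 0 := by rw [← Category.assoc, hιπ, zero_comp]
  have hπeq : π = (π ≫ e.hom) ≫ e.inv := by simp
  have hZUw : ∀ W ∈ rightPerp U, ∀ f : Z ⟶ W, f = 0 := by
    intro W hW f
    have h0 : (Triangle.mk (0 : (X₁⟦(-1 : ℤ)⟧) ⟶ X₂) ι π).mor₂ ≫ f = 0 := by
      exact htpU.1 X₂ hX₂'.1.1 W hW (ι ≫ f)
    obtain ⟨g', hg'⟩ := Triangle.yoneda_exact₃ _ hTz f h0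
    change (X₁⟦(-1 : ℤ)⟧⟦(1 : ℤ)⟧) ⟶ W at g'
    have hg0 : g' = 0 := by
      have h1' : e.inv ≫ g' = 0 := htpU.1 X₁ hX₁'.1.1 W hW _
      calc g' = e.hom ≫ (e.inv ≫ g') := by simp
        _ = 0 := by rw [h1', comp_zero]
    rw [hg', hg0]; exact comp_zero
  have hZsh : (Z⟦(1 : ℤ)⟧) ∈ rightPerp U := by
    intro U' hU' f
    have hπ1 : f ≫ π⟦(1 : ℤ)⟧' = 0 := by
      rw [hπeq, Functor.map_comp, ← Category.assoc,
        hX₁sh U' hU' (f ≫ (π ≫ e.hom)⟦(1 : ℤ)⟧'), zero_comp]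
    have h0 : f ≫
        ((Triangle.mk (0 : (X₁⟦(-1 : ℤ)⟧) ⟶ X₂) ι π).rotate.rotate.rotate.rotate).mor₂ = 0 := by
      show f ≫ (-(π⟦(1 : ℤ)⟧')) = 0
      rw [Preadditive.comp_neg, hπ1, neg_zero]
    obtain ⟨g', hg'⟩ := Triangle.coyoneda_exact₂ _
      (rot_of_distTriang _ (rot_of_distTriang _ (rot_of_distTriang _
        (rot_of_distTriang _ hTz)))) f h0
    have hg0 : g' = 0 := hX₂sh U' hU' g'
    rw [hg', hg0]; exact zero_comp
  have hZX : Z ∈ X := mem_X_aux htpU hX hXsumm h2 Z hZUw hZsh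
  exact ⟨Z, hZX, x₂ ≫ ι + x₁ ≫ ((e.inv ≫ σ') - (e.inv ≫ σ') ≫ ρ ≫ ι),
    ρ ≫ y₂ + (π ≫ e.hom) ≫ y₁,
    split_sum_eq ι ρ (e.inv ≫ σ') (π ≫ e.hom) hιρ hσπ' hιπ' x₁ y₁ x₂ y₂⟩

theorem statement_6 (N U V X : Set T) (hN : IsTriangulatedSub N)
    (htpU : TorsionPair U (rightPerp U)) (htpV : TorsionPair (leftPerp V) V)
    (hX : X = U ∩ V ∩ N) (hXsumm : ClosedUnderSummands X)
    (h1 : ∀ A : T, (A⟦(-1 : ℤ)⟧) ∈ leftPerp V → A ∈ U ∩ N)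
    (h2 : ∀ A : T, (A⟦(1 : ℤ)⟧) ∈ rightPerp U ↔ A ∈ V ∩ N) :
    VerdierCondition N U X V := by
  intro A B N₀ s g h hTr hA hB hN₀
  have hT' : (Triangle.mk s g h).invRotate ∈ distTriang T := inv_rot_of_distTriang _ hTr
  set T' := (Triangle.mk s g h).invRotate with hT'def
  -- `T' = (N₀⟦-1⟧, A, B)` with `T'.mor₂ = s`.
  have hMN : (N₀⟦(-1 : ℤ)⟧) ∈ N := hN.unshift N₀ hN₀
  -- torsion triangle of `N₀⟦-1⟧` with respect to `(^⊥V, V)`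
  obtain ⟨C, D, c, p, d, hT₂, hC, hD⟩ := htpV.2 (N₀⟦(-1 : ℤ)⟧)
  have hC1 : (C⟦(1 : ℤ)⟧) ∈ U ∩ N := by
    refine h1 _ ?_
    intro V₀ hV₀ f
    have h0 : (shiftShiftNeg C (1 : ℤ)).inv ≫ f = 0 := hC V₀ hV₀ _
    calc f = (shiftShiftNeg C (1 : ℤ)).hom ≫ ((shiftShiftNeg C (1 : ℤ)).inv ≫ f) :=
        (Iso.hom_inv_id_assoc _ _).symm
      _ = 0 := by rw [h0, comp_zero]
  have hCN : C ∈ N := hN.closedIso (shiftShiftNeg C (1 : ℤ)) (hN.unshift _ hC1.2)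
  have hDN : D ∈ N := hN.two_of_three₁₂ _ hT₂ hCN hMN
  have hD1 : (D⟦(1 : ℤ)⟧) ∈ rightPerp U := (h2 D).mpr ⟨hD, hDN⟩
  -- `T'.mor₁ : N₀⟦-1⟧ ⟶ A` factors through `p : N₀⟦-1⟧ ⟶ D`
  obtain ⟨a₀, ha₀⟩ : ∃ a₀ : (N₀⟦(-1 : ℤ)⟧) ⟶ A, a₀ = T'.mor₁ := ⟨T'.mor₁, rfl⟩
  have hca : (Triangle.mk c p d).mor₁ ≫ a₀ = 0 := htpV.1 C hC A hA.2 _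
  obtain ⟨a', ha'⟩ : ∃ a' : D ⟶ A, a₀ = p ≫ a' := by
    obtain ⟨a'', ha''⟩ := Triangle.yoneda_exact₂ _ hT₂ a₀ hca
    exact ⟨a'', ha''⟩
  -- torsion triangle of `D` with respect to `(U, U^⊥)`; `X₆ ∈ X`
  obtain ⟨X₆, W₆, i₆, q₆, e₆, hT₄, hX₆U, hW₆⟩ := htpU.2 D
  have hX₆sh : (X₆⟦(1 : ℤ)⟧) ∈ rightPerp U := by
    intro U' hU' f
    have h0 : f ≫ ((Triangle.mk i₆ q₆ e₆).rotate.rotate).mor₂ = 0 := by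
      show f ≫ (-(i₆⟦(1 : ℤ)⟧')) = 0
      rw [Preadditive.comp_neg, hD1 U' hU' (f ≫ i₆⟦(1 : ℤ)⟧'), neg_zero]
    obtain ⟨g', hg'⟩ := Triangle.coyoneda_exact₂ _
      (rot_of_distTriang _ (rot_of_distTriang _ hT₄)) f h0
    rw [hg', hW₆ U' hU' g']; exact zero_comp
  have hX₆X : X₆ ∈ X :=
    mem_X_aux htpU hX hXsumm h2 X₆ (fun W hW f => htpU.1 X₆ hX₆U W hW f) hX₆sh
  -- Goal 1 : produce `t₁` with `𝟙 A - ζ ≫ a' = s ≫ t₁` where `ζ ≫ a'` factors through `X₆`.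
  have hT'' : T'.invRotate ∈ distTriang T := inv_rot_of_distTriang _ hT'
  have hBD : ∀ f : (B⟦(-1 : ℤ)⟧) ⟶ D, f = 0 := by
    intro f
    have h0 : (shiftNegShift B (1 : ℤ)).inv ≫ f⟦(1 : ℤ)⟧' = 0 := hD1 B hB.1 _
    have h1' : f⟦(1 : ℤ)⟧' = 0 := by
      calc f⟦(1 : ℤ)⟧'
          = (shiftNegShift B (1 : ℤ)).hom ≫ ((shiftNegShift B (1 : ℤ)).inv ≫ f⟦(1 : ℤ)⟧') := by
            simp
        _ = 0 := by rw [h0, comp_zero]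
    exact (shiftFunctor T (1 : ℤ)).map_injective (by rw [h1', Functor.map_zero])
  have hb₁p : T'.invRotate.mor₁ ≫ (Triangle.mk c p d).mor₂ = 0 := hBD _
  obtain ⟨θ, hθ⟩ := Triangle.coyoneda_exact₂ _ hT₂ T'.invRotate.mor₁ hb₁p
  obtain ⟨ζ, hζp⟩ : ∃ ζ : A ⟶ D, a₀ ≫ ζ = p := by
    obtain ⟨ζ₀, hζ₁, -⟩ := complete_distinguished_triangle_morphism T'.invRotate
      (Triangle.mk c p d) hT'' hT₂ θ (𝟙 _) (by exact (comp_id _).trans hθ)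
    refine ⟨ζ₀, ?_⟩
    show a₀ ≫ ζ₀ = p
    rw [ha₀]
    exact hζ₁.trans (id_comp _)
  have hζq : ζ ≫ (Triangle.mk i₆ q₆ e₆).mor₂ = 0 := hW₆ A hA.1 _
  obtain ⟨ζ'', hζ''⟩ : ∃ ζ'' : A ⟶ X₆, ζ = ζ'' ≫ i₆ := by
    obtain ⟨z, hz⟩ := Triangle.coyoneda_exact₂ _ hT₄ ζ hζq
    exact ⟨z, hz⟩
  have hφ : a₀ ≫ (𝟙 A - ζ ≫ a') = 0 := by
    rw [Preadditive.comp_sub, comp_id, ← Category.assoc, hζp, ← ha', sub_self]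
  have hφ' : T'.mor₁ ≫ (𝟙 A - ζ ≫ a') = 0 := by rw [← ha₀]; exact hφ
  obtain ⟨t₁, ht₁'⟩ : ∃ t₁ : B ⟶ A, 𝟙 A - ζ ≫ a' = s ≫ t₁ := by
    obtain ⟨t, ht⟩ := Triangle.yoneda_exact₂ _ hT' (𝟙 A - ζ ≫ a') hφ'
    exact ⟨t, ht⟩
  -- Goal 2 : produce `t₂` with `𝟙 B - β ≫ ξ = t₂ ≫ s` where `β ≫ ξ` factors through `X₇`.
  obtain ⟨ξ, hξb⟩ : ∃ ξ : (C⟦(1 : ℤ)⟧) ⟶ B, ξ ≫ T'.mor₃ = -c⟦(1 : ℤ)⟧' := by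
    obtain ⟨ξ₀, -, hξ₂⟩ := complete_distinguished_triangle_morphism (Triangle.mk c p d).rotate
      T' (rot_of_distTriang _ hT₂) hT' (𝟙 _) a' (by exact (ha'.symm.trans ha₀).trans (id_comp _).symm)
    refine ⟨ξ₀, ?_⟩
    erw [← hξ₂]
    exact (congrArg (fun x => (Triangle.mk c p d).rotate.mor₃ ≫ x)
      (CategoryTheory.Functor.map_id (shiftFunctor T (1 : ℤ)) _)).trans (comp_id _)
  have hb'p : T'.mor₃ ≫ ((Triangle.mk c p d).rotate.rotate.rotate).mor₂ = 0 := by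
    show T'.mor₃ ≫ (-(p⟦(1 : ℤ)⟧')) = 0
    erw [Preadditive.comp_neg, hD1 B hB.1 (T'.mor₃ ≫ p⟦(1 : ℤ)⟧'), neg_zero]
  obtain ⟨β, hβ'⟩ : ∃ β : B ⟶ (C⟦(1 : ℤ)⟧), T'.mor₃ = -(β ≫ c⟦(1 : ℤ)⟧') := by
    obtain ⟨β₀, hβ₀⟩ := Triangle.coyoneda_exact₂ _
      (rot_of_distTriang _ (rot_of_distTriang _ (rot_of_distTriang _ hT₂))) T'.mor₃ hb'p
    refine ⟨β₀, ?_⟩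
    rw [hβ₀]; show β₀ ≫ (-(c⟦(1 : ℤ)⟧')) = -(β₀ ≫ c⟦(1 : ℤ)⟧'); exact Preadditive.comp_neg _ _
  -- the torsion triangle of `C⟦1⟧` with respect to `(^⊥V, V)`; `X₇ ∈ X`
  obtain ⟨C₇, X₇, c₇, p₇, d₇, hT₃, hC₇, hX₇V⟩ := htpV.2 (C⟦(1 : ℤ)⟧)
  have hC₇1 : (C₇⟦(1 : ℤ)⟧) ∈ U ∩ N := by
    refine h1 _ ?_
    intro V₀ hV₀ f
    have h0 : (shiftShiftNeg C₇ (1 : ℤ)).inv ≫ f = 0 := hC₇ V₀ hV₀ _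
    calc f = (shiftShiftNeg C₇ (1 : ℤ)).hom ≫ ((shiftShiftNeg C₇ (1 : ℤ)).inv ≫ f) :=
        (Iso.hom_inv_id_assoc _ _).symm
      _ = 0 := by rw [h0, comp_zero]
  have hC₇N : C₇ ∈ N := hN.closedIso (shiftShiftNeg C₇ (1 : ℤ)) (hN.unshift _ hC₇1.2)
  have hX₇N : X₇ ∈ N := hN.two_of_three₁₂ _ hT₃ hC₇N hC1.2
  have hX₇sh : (X₇⟦(1 : ℤ)⟧) ∈ rightPerp U := (h2 X₇).mpr ⟨hX₇V, hX₇N⟩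
  have hX₇Uw : ∀ W ∈ rightPerp U, ∀ f : X₇ ⟶ W, f = 0 := by
    intro W hW f
    have h0 : (Triangle.mk c₇ p₇ d₇).mor₂ ≫ f = 0 := hW (C⟦(1 : ℤ)⟧) hC1.1 _
    obtain ⟨g', hg'⟩ := Triangle.yoneda_exact₃ _ hT₃ f h0
    rw [hg', hW _ hC₇1.1 g']; exact comp_zero
  have hX₇X : X₇ ∈ X := mem_X_aux htpU hX hXsumm h2 X₇ hX₇Uw hX₇sh
  have hc₇ξ : (Triangle.mk c₇ p₇ d₇).mor₁ ≫ ξ = 0 := htpV.1 C₇ hC₇ B hB.2 _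
  obtain ⟨ξ', hξ'⟩ : ∃ ξ' : X₇ ⟶ B, ξ = p₇ ≫ ξ' := by
    obtain ⟨x, hx⟩ := Triangle.yoneda_exact₂ _ hT₃ ξ hc₇ξ
    exact ⟨x, hx⟩
  have hψb : (𝟙 B - β ≫ ξ) ≫ T'.rotate.mor₂ = 0 := by
    have hrot : T'.rotate.mor₂ = T'.mor₃ := rfl
    erw [hrot, Preadditive.sub_comp, id_comp, Category.assoc, hξb, Preadditive.comp_neg,
      ← hβ', sub_self]
  obtain ⟨t₂, ht₂'⟩ : ∃ t₂ : B ⟶ A, 𝟙 B - β ≫ ξ = t₂ ≫ s := by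
    obtain ⟨t, ht⟩ := Triangle.coyoneda_exact₂ _ (rot_of_distTriang _ hT') (𝟙 B - β ≫ ξ) hψb
    exact ⟨t, ht⟩
  refine ⟨t₂, ?_, ?_⟩
  · -- `𝟙 A - s ≫ t₂` factors through `X`
    have hζa : ζ ≫ a' = 𝟙 A - s ≫ t₁ := by rw [← ht₁']; abel
    have hβξ : β ≫ ξ = 𝟙 B - t₂ ≫ s := by rw [← ht₂']; abel
    have key : 𝟙 A - s ≫ t₂ = (𝟙 A - s ≫ t₂) ≫ (ζ ≫ a') + s ≫ ((β ≫ ξ) ≫ t₁) := by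
      rw [hζa, hβξ]
      simp only [Preadditive.comp_sub, Preadditive.sub_comp, comp_id, id_comp, Category.assoc]
      abel
    rw [key]
    refine factorsThru_add htpU hX hXsumm h2 ?_ ?_
    · refine ⟨X₆, hX₆X, (𝟙 A - s ≫ t₂) ≫ ζ'', i₆ ≫ a', ?_⟩
      have hζeq : ζ'' ≫ i₆ = ζ := by simpa using hζ''.symm
      rw [Category.assoc, ← Category.assoc ζ'' i₆ a', hζeq]
    · refine ⟨X₇, hX₇X, s ≫ β ≫ p₇, ξ' ≫ t₁, ?_⟩
      have hξeq : p₇ ≫ ξ' = ξ := by simpa using hξ'.symm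
      rw [Category.assoc, Category.assoc, Category.assoc]
      congr 2
      rw [← Category.assoc, hξeq]
  · -- `𝟙 B - t₂ ≫ s` factors through `X₇`
    have hβξ : 𝟙 B - t₂ ≫ s = β ≫ ξ := by rw [← ht₂']; abel
    refine ⟨X₇, hX₇X, β ≫ p₇, ξ', ?_⟩
    have hξeq : p₇ ≫ ξ' = ξ := by simpa using hξ'.symm
    rw [hβξ, Category.assoc, hξeq]

end VerdierPaper
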